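/- Fix ρ₀ > 0 and set r₀ := ((2−√3)/2)^{1/2}·ρ₀. The function w(r) := (r² + (√3/2)ρ₀²)/(ρ₀⁴ − (r² + (√3/2)ρ₀²)²)^{1/2}, defined for 0 < r < r₀, is differentiable and satisfies w'(r) = (2w(r)³ + 2w(r) − √3(1 + w(r)²)^{3/2})/r on (0, r₀); moreover w(r) > √3 for all r ∈ (0, r₀), w(r) → √3 as r → 0⁺, w(r) → +∞ as r → r₀⁻, and for each fixed r > 0 one has w(r) → √3 as ρ₀ → ∞ (where w is defined once r₀ > r). -/

import Mathlib

open Filter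

/-- The type-I solution `w(r) = (r² + (√3/2)ρ₀²)/√(ρ₀⁴ − (r² + (√3/2)ρ₀²)²)`. -/
noncomputable def wTypeI (ρ₀ r : ℝ) : ℝ :=
  (r ^ 2 + (Real.sqrt 3 / 2) * ρ₀ ^ 2) /
    Real.sqrt (ρ₀ ^ 4 - (r ^ 2 + (Real.sqrt 3 / 2) * ρ₀ ^ 2) ^ 2)

set_option maxHeartbeats 1600000 in
/-- for `ρ₀ > 0` and `r₀ = √((2−√3)/2)·ρ₀`, the function `wTypeI ρ₀` solves
`w' = (2w³ + 2w − √3(1+w²)^{3/2})/r` on `(0, r₀)`, satisfies `w > √3` there,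
tends to `√3` as `r → 0⁺`, to `+∞` as `r → r₀⁻`, and for each fixed `r > 0`
tends to `√3` as `ρ₀ → ∞`. -/
theorem stmt_5 (ρ₀ : ℝ) (hρ₀ : 0 < ρ₀) (r₀ : ℝ)
    (hr₀ : r₀ = Real.sqrt ((2 - Real.sqrt 3) / 2) * ρ₀) :
    (∀ r ∈ Set.Ioo (0 : ℝ) r₀,
      HasDerivAt (wTypeI ρ₀)
        ((2 * (wTypeI ρ₀ r) ^ 3 + 2 * wTypeI ρ₀ r
          - Real.sqrt 3 * (Real.sqrt (1 + (wTypeI ρ₀ r) ^ 2)) ^ 3) / r) r)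
    ∧ (∀ r ∈ Set.Ioo (0 : ℝ) r₀, Real.sqrt 3 < wTypeI ρ₀ r)
    ∧ Tendsto (wTypeI ρ₀) (nhdsWithin 0 (Set.Ioi 0)) (nhds (Real.sqrt 3))
    ∧ Tendsto (wTypeI ρ₀) (nhdsWithin r₀ (Set.Iio r₀)) atTop
    ∧ (∀ r : ℝ, 0 < r → Tendsto (fun ρ => wTypeI ρ r) atTop (nhds (Real.sqrt 3))) := by
  have h3 : Real.sqrt 3 ^ 2 = 3 := Real.sq_sqrt (by norm_num)
  have h3n : (0:ℝ) < Real.sqrt 3 := Real.sqrt_pos.mpr (by norm_num)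
  have h3lt : Real.sqrt 3 < 2 := by nlinarith
  have hρ₀2 : 0 < ρ₀ ^ 2 := by positivity
  have hr₀pos : 0 < r₀ := by
    rw [hr₀]
    exact mul_pos (Real.sqrt_pos.mpr (by nlinarith)) hρ₀
  have hr₀sq : r₀ ^ 2 = (2 - Real.sqrt 3) / 2 * ρ₀ ^ 2 := by
    rw [hr₀, mul_pow, Real.sq_sqrt (by nlinarith : (0:ℝ) ≤ (2 - Real.sqrt 3) / 2)]
  set c := Real.sqrt 3 / 2 * ρ₀ ^ 2 with hc
  have hcpos : 0 < c := by rw [hc]; positivity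
  have hc2 : c ^ 2 = 3 / 4 * ρ₀ ^ 4 := by rw [hc, mul_pow, div_pow, h3]; ring
  have h2c : Real.sqrt 3 * ρ₀ ^ 2 = 2 * c := by rw [hc]; ring
  have hA0 : ∀ r : ℝ, 0 < r ^ 2 + c := fun r => by positivity
  have hP : ∀ r ∈ Set.Ioo (0:ℝ) r₀, 0 < ρ₀ ^ 4 - (r ^ 2 + c) ^ 2 := by
    rintro r ⟨hr0, hrr⟩
    have h1 : r ^ 2 < r₀ ^ 2 := by nlinarith
    rw [hr₀sq] at h1
    have hAlt : r ^ 2 + c < ρ₀ ^ 2 := by rw [hc]; nlinarith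
    nlinarith [hA0 r]
  -- Part 2
  have part2 : ∀ r ∈ Set.Ioo (0:ℝ) r₀, Real.sqrt 3 < wTypeI ρ₀ r := by
    intro r hr
    have hP' := hP r hr
    have hs : 0 < Real.sqrt (ρ₀ ^ 4 - (r ^ 2 + c) ^ 2) := Real.sqrt_pos.mpr hP'
    have hs2 : Real.sqrt (ρ₀ ^ 4 - (r ^ 2 + c) ^ 2) ^ 2 = ρ₀ ^ 4 - (r ^ 2 + c) ^ 2 :=
      Real.sq_sqrt hP'.le
    rw [wTypeI, ← hc, lt_div_iff₀ hs]
    have h2 : (Real.sqrt 3 * Real.sqrt (ρ₀ ^ 4 - (r ^ 2 + c) ^ 2)) ^ 2 < (r ^ 2 + c) ^ 2 := by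
      rw [mul_pow, h3, hs2]
      have hr2 : 0 < r ^ 2 := pow_pos hr.1 2
      nlinarith [hc2, mul_pos hr2 hcpos, sq_nonneg (r ^ 2)]
    exact lt_of_pow_lt_pow_left₀ 2 (hA0 r).le h2
  -- Part 1
  have part1 : ∀ r ∈ Set.Ioo (0:ℝ) r₀,
      HasDerivAt (wTypeI ρ₀)
        ((2 * (wTypeI ρ₀ r) ^ 3 + 2 * wTypeI ρ₀ r
          - Real.sqrt 3 * (Real.sqrt (1 + (wTypeI ρ₀ r) ^ 2)) ^ 3) / r) r := by
    intro r hr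
    have hrpos := hr.1
    have hP' := hP r hr
    set s := Real.sqrt (ρ₀ ^ 4 - (r ^ 2 + c) ^ 2) with hsdef
    have hs : 0 < s := Real.sqrt_pos.mpr hP'
    have hs2 : s ^ 2 = ρ₀ ^ 4 - (r ^ 2 + c) ^ 2 := Real.sq_sqrt hP'.le
    have hA : HasDerivAt (fun x : ℝ => x ^ 2 + c) (2 * r) r := by
      simpa using (hasDerivAt_pow 2 r).add_const c
    have hPd : HasDerivAt (fun x : ℝ => ρ₀ ^ 4 - (x ^ 2 + c) ^ 2)
        (0 - 2 * (r ^ 2 + c) ^ 1 * (2 * r)) r := (hasDerivAt_const r _).sub (hA.pow 2)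
    have hsd : HasDerivAt (fun x : ℝ => Real.sqrt (ρ₀ ^ 4 - (x ^ 2 + c) ^ 2))
        ((0 - 2 * (r ^ 2 + c) ^ 1 * (2 * r)) / (2 * s)) r := hPd.sqrt (ne_of_gt hP')
    have hw : HasDerivAt (wTypeI ρ₀)
        ((2 * r * s - (r ^ 2 + c) * ((0 - 2 * (r ^ 2 + c) ^ 1 * (2 * r)) / (2 * s))) / s ^ 2) r := by
      have h := hA.div hsd (ne_of_gt hs)
      exact h
    have hwv : wTypeI ρ₀ r = (r ^ 2 + c) / s := by rw [wTypeI, ← hc]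
    have hsq : 1 + ((r ^ 2 + c) / s) ^ 2 = (ρ₀ ^ 2 / s) ^ 2 := by
      field_simp
      linear_combination hs2
    have h1w : Real.sqrt (1 + ((r ^ 2 + c) / s) ^ 2) = ρ₀ ^ 2 / s := by
      rw [hsq, Real.sqrt_sq (by positivity)]
    have key : (2 * (wTypeI ρ₀ r) ^ 3 + 2 * wTypeI ρ₀ r
          - Real.sqrt 3 * (Real.sqrt (1 + (wTypeI ρ₀ r) ^ 2)) ^ 3) / r
        = (2 * r * s - (r ^ 2 + c) * ((0 - 2 * (r ^ 2 + c) ^ 1 * (2 * r)) / (2 * s))) / s ^ 2 := by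
      rw [hwv, h1w]
      field_simp
      ring_nf
      linear_combination (4 * c) * hs2 - (2 * ρ₀ ^ 4) * h2c
    rw [key]
    exact hw
  refine ⟨part1, part2, ?_, ?_, ?_⟩
  -- Part 3
  · have hP0 : 0 < ρ₀ ^ 4 - ((0:ℝ) ^ 2 + c) ^ 2 := by nlinarith
    have hcont : ContinuousAt (wTypeI ρ₀) 0 := by
      unfold wTypeI
      apply ContinuousAt.div (by fun_prop)
      · exact Real.continuous_sqrt.continuousAt.comp (by fun_prop)
      · rw [← hc]
        exact ne_of_gt (Real.sqrt_pos.mpr hP0)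
    have hw0 : wTypeI ρ₀ 0 = Real.sqrt 3 := by
      rw [wTypeI, ← hc]
      have h04 : ρ₀ ^ 4 - ((0:ℝ) ^ 2 + c) ^ 2 = (ρ₀ ^ 2 / 2) ^ 2 := by
        rw [hc]; nlinarith
      rw [h04, Real.sqrt_sq (by positivity), hc]
      field_simp
      ring
    rw [← hw0]
    exact hcont.tendsto.mono_left nhdsWithin_le_nhds
  -- Part 4
  · have hAr₀ : r₀ ^ 2 + c = ρ₀ ^ 2 := by rw [hr₀sq, hc]; ring
    have hnum : Tendsto (fun r : ℝ => r ^ 2 + c) (nhdsWithin r₀ (Set.Iio r₀)) (nhds (ρ₀ ^ 2)) := by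
      have hct : ContinuousAt (fun r : ℝ => r ^ 2 + c) r₀ := by fun_prop
      have h := hct.tendsto.mono_left (nhdsWithin_le_nhds (s := Set.Iio r₀))
      rwa [hAr₀] at h
    have hden : Tendsto (fun r : ℝ => Real.sqrt (ρ₀ ^ 4 - (r ^ 2 + c) ^ 2))
        (nhdsWithin r₀ (Set.Iio r₀)) (nhdsWithin 0 (Set.Ioi 0)) := by
      rw [tendsto_nhdsWithin_iff]
      constructor
      · have hct : ContinuousAt (fun r : ℝ => Real.sqrt (ρ₀ ^ 4 - (r ^ 2 + c) ^ 2)) r₀ :=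
          Real.continuous_sqrt.continuousAt.comp (by fun_prop)
        have hval : Real.sqrt (ρ₀ ^ 4 - (r₀ ^ 2 + c) ^ 2) = 0 := by
          rw [hAr₀]
          simp [Real.sqrt_eq_zero']
          nlinarith
        have h := hct.tendsto.mono_left (nhdsWithin_le_nhds (s := Set.Iio r₀))
        rwa [hval] at h
      · have hmem : Set.Ioo (0:ℝ) r₀ ∈ nhdsWithin r₀ (Set.Iio r₀) :=
          Ioo_mem_nhdsLT_of_mem ⟨hr₀pos, le_refl r₀⟩
        filter_upwards [hmem] with r hr
        exact Real.sqrt_pos.mpr (hP r hr)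
    have hinv : Tendsto (fun r : ℝ => (Real.sqrt (ρ₀ ^ 4 - (r ^ 2 + c) ^ 2))⁻¹)
        (nhdsWithin r₀ (Set.Iio r₀)) atTop := hden.inv_tendsto_nhdsGT_zero
    have := hnum.pos_mul_atTop hρ₀2 hinv
    refine this.congr (fun r => ?_)
    rw [wTypeI, ← hc, div_eq_mul_inv]
  -- Part 5
  · intro r hrpos
    have hu : Tendsto (fun ρ : ℝ => r ^ 2 / ρ ^ 2 + Real.sqrt 3 / 2) atTop
        (nhds (Real.sqrt 3 / 2)) := by
      have h1 : Tendsto (fun ρ : ℝ => ρ ^ 2) atTop atTop := tendsto_pow_atTop two_ne_zero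
      have h2 : Tendsto (fun ρ : ℝ => r ^ 2 / ρ ^ 2) atTop (nhds 0) := by
        simpa [div_eq_mul_inv] using h1.inv_tendsto_atTop.const_mul (r ^ 2)
      simpa using h2.add_const (Real.sqrt 3 / 2)
    have hden12 : Real.sqrt (1 - (Real.sqrt 3 / 2) ^ 2) = 1 / 2 := by
      have h14 : 1 - (Real.sqrt 3 / 2) ^ 2 = ((1:ℝ) / 2) ^ 2 := by
        rw [div_pow, h3]; norm_num
      rw [h14, Real.sqrt_sq (by norm_num)]
    have hF : ContinuousAt (fun u : ℝ => u / Real.sqrt (1 - u ^ 2)) (Real.sqrt 3 / 2) := by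
      apply ContinuousAt.div continuousAt_id
      · exact Real.continuous_sqrt.continuousAt.comp (by fun_prop)
      · rw [hden12]; norm_num
    have hFval : Real.sqrt 3 / 2 / Real.sqrt (1 - (Real.sqrt 3 / 2) ^ 2) = Real.sqrt 3 := by
      rw [hden12]; ring
    have hcomp : Tendsto ((fun u : ℝ => u / Real.sqrt (1 - u ^ 2)) ∘
        (fun ρ : ℝ => r ^ 2 / ρ ^ 2 + Real.sqrt 3 / 2)) atTop (nhds (Real.sqrt 3)) := by
      have h := hF.tendsto.comp hu
      rwa [hFval] at h
    refine hcomp.congr' ?_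
    filter_upwards [eventually_gt_atTop (0:ℝ)] with ρ hρ
    have hρ2 : (0:ℝ) < ρ ^ 2 := by positivity
    have hnum : r ^ 2 + Real.sqrt 3 / 2 * ρ ^ 2
        = ρ ^ 2 * (r ^ 2 / ρ ^ 2 + Real.sqrt 3 / 2) := by field_simp
    have hden2 : ρ ^ 4 - (r ^ 2 + Real.sqrt 3 / 2 * ρ ^ 2) ^ 2
        = (ρ ^ 2) ^ 2 * (1 - (r ^ 2 / ρ ^ 2 + Real.sqrt 3 / 2) ^ 2) := by
      field_simp
    simp only [Function.comp, wTypeI]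
    rw [hden2, hnum, Real.sqrt_mul (sq_nonneg _), Real.sqrt_sq hρ2.le,
      mul_div_mul_left _ _ (ne_of_gt hρ2)]
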